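/- Let b₁₁, b₂₂ > 0 and b₁₂ ∈ ℝ with b₁₁b₂₂ − b₁₂² > 0, so that S := [[b₁₁, −b₁₂], [−b₁₂, b₂₂]] is symmetric positive definite. Let (η₁, η₂) and (η̃₁, η̃₂) be independent random vectors, each distributed as the centered bivariate Gaussian N(0, S⁻¹) on ℝ², and set X₁ := ½(η₁² + η̃₁²), X₂ := ½(η₂² + η̃₂²). Then for every t ≥ 0, E[exp(−tX₂) | σ(X₁)] = (b₂₂/(t + b₂₂)) · exp(−b₁₂² t X₁ / (b₂₂(t + b₂₂))) almost surely. -/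

import Mathlib

open MeasureTheory ProbabilityTheory Matrix


open MeasureTheory Real
open scoped NNReal ENNReal

section GaussAux

variable {b11 b22 b12 : ℝ}

lemma gauss_shift {s : ℝ} (hs : 0 < s) (d : ℝ) :
    ∫ v : ℝ, Real.exp (-(s * (v - d) ^ 2) / 2) = Real.sqrt (2 * π / s) := by
  have h0 : ∀ v : ℝ, Real.exp (-(s * (v - d) ^ 2) / 2)
      = (fun w : ℝ => Real.exp (-(s / 2) * w ^ 2)) (v - d) := by
    intro v; simp only []; congr 1; ring
  calc (∫ v : ℝ, Real.exp (-(s * (v - d) ^ 2) / 2))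
      = ∫ v : ℝ, (fun w : ℝ => Real.exp (-(s / 2) * w ^ 2)) (v - d) := by
        exact integral_congr_ae (Filter.Eventually.of_forall h0)
    _ = ∫ w : ℝ, Real.exp (-(s / 2) * w ^ 2) :=
        integral_sub_right_eq_self (μ := volume) (fun w : ℝ => Real.exp (-(s / 2) * w ^ 2)) d
    _ = Real.sqrt (π / (s / 2)) := integral_gaussian _
    _ = Real.sqrt (2 * π / s) := by rw [div_div_eq_mul_div, mul_comm]

lemma R_key {s : ℝ} (hs : 0 < s) (u v : ℝ) :
    -(s * v ^ 2 - 2 * b12 * u * v + b11 * u ^ 2) / 2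
      = (b12 ^ 2 * u ^ 2 / s - b11 * u ^ 2) / 2 + -(s * (v - b12 * u / s) ^ 2) / 2 := by
  field_simp
  ring

lemma R_integrable {s : ℝ} (hs : 0 < s) (u : ℝ) :
    Integrable (fun v : ℝ =>
      Real.exp (-(s * v ^ 2 - 2 * b12 * u * v + b11 * u ^ 2) / 2)) := by
  have h : Integrable (fun v : ℝ =>
      Real.exp ((b12 ^ 2 * u ^ 2 / s - b11 * u ^ 2) / 2) *
        Real.exp (-(s / 2) * (v - b12 * u / s) ^ 2)) :=
    ((integrable_exp_neg_mul_sq (by linarith : (0:ℝ) < s / 2)).comp_sub_right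
      (b12 * u / s)).const_mul _
  refine h.congr (Filter.Eventually.of_forall fun v => ?_)
  dsimp only
  rw [← Real.exp_add]
  congr 1
  rw [R_key hs u v]
  ring

lemma R_value {s : ℝ} (hs : 0 < s) (u : ℝ) :
    (∫ v : ℝ, Real.exp (-(s * v ^ 2 - 2 * b12 * u * v + b11 * u ^ 2) / 2))
      = Real.sqrt (2 * π / s) * Real.exp ((b12 ^ 2 * u ^ 2 / s - b11 * u ^ 2) / 2) := by
  have h0 : ∀ v : ℝ, Real.exp (-(s * v ^ 2 - 2 * b12 * u * v + b11 * u ^ 2) / 2)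
      = Real.exp ((b12 ^ 2 * u ^ 2 / s - b11 * u ^ 2) / 2) *
          Real.exp (-(s * (v - b12 * u / s) ^ 2) / 2) := by
    intro v; rw [← Real.exp_add, R_key hs u v]
  calc (∫ v : ℝ, Real.exp (-(s * v ^ 2 - 2 * b12 * u * v + b11 * u ^ 2) / 2))
      = ∫ v : ℝ, Real.exp ((b12 ^ 2 * u ^ 2 / s - b11 * u ^ 2) / 2) *
          Real.exp (-(s * (v - b12 * u / s) ^ 2) / 2) :=
        integral_congr_ae (Filter.Eventually.of_forall h0)
    _ = Real.exp ((b12 ^ 2 * u ^ 2 / s - b11 * u ^ 2) / 2) *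
          ∫ v : ℝ, Real.exp (-(s * (v - b12 * u / s) ^ 2) / 2) := integral_const_mul _ _
    _ = _ := by rw [gauss_shift hs]; ring


lemma prod_integrable (hb11 : 0 < b11) {s : ℝ} (hs : 0 < s) (hbs : b12 ^ 2 < b11 * s)
    {χ : ℝ → ℝ} (hχ : Measurable χ) (hχ1 : ∀ u, |χ u| ≤ 1) :
    Integrable (fun uv : ℝ × ℝ => χ uv.1 *
        Real.exp (-(s * uv.2 ^ 2 - 2 * b12 * uv.1 * uv.2 + b11 * uv.1 ^ 2) / 2))
      ((volume : Measure ℝ).prod volume) := by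
  have hmeas : AEStronglyMeasurable (fun uv : ℝ × ℝ => χ uv.1 *
      Real.exp (-(s * uv.2 ^ 2 - 2 * b12 * uv.1 * uv.2 + b11 * uv.1 ^ 2) / 2))
      ((volume : Measure ℝ).prod volume) := by
    apply Measurable.aestronglyMeasurable
    apply (hχ.comp measurable_fst).mul
    apply Real.measurable_exp.comp
    fun_prop
  rw [integrable_prod_iff hmeas]
  have ha : (0:ℝ) < (b11 - b12 ^ 2 / s) / 2 := by
    have : b12 ^ 2 / s < b11 := (div_lt_iff₀ hs).mpr (by linarith)
    linarith
  constructor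
  · refine Filter.Eventually.of_forall fun u => ?_
    exact ((R_integrable (b11 := b11) (b12 := b12) hs u).const_mul (χ u) : _)
  have hnorm : ∀ u : ℝ, (∫ v : ℝ, ‖χ u *
      Real.exp (-(s * v ^ 2 - 2 * b12 * u * v + b11 * u ^ 2) / 2)‖)
      = |χ u| * (Real.sqrt (2 * π / s) *
          Real.exp ((b12 ^ 2 * u ^ 2 / s - b11 * u ^ 2) / 2)) := by
    intro u
    have : ∀ v : ℝ, ‖χ u * Real.exp (-(s * v ^ 2 - 2 * b12 * u * v + b11 * u ^ 2) / 2)‖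
        = |χ u| * Real.exp (-(s * v ^ 2 - 2 * b12 * u * v + b11 * u ^ 2) / 2) := by
      intro v
      rw [norm_mul, Real.norm_eq_abs, Real.norm_eq_abs, abs_of_pos (Real.exp_pos _)]
    rw [integral_congr_ae (Filter.Eventually.of_forall this), integral_const_mul,
      R_value hs u]
  refine Integrable.mono' (g := fun u : ℝ => Real.sqrt (2 * π / s) *
      Real.exp (-((b11 - b12 ^ 2 / s) / 2) * u ^ 2))
    ((integrable_exp_neg_mul_sq ha).const_mul _) (hmeas.norm.integral_prod_right') ?_
  refine Filter.Eventually.of_forall fun u => ?_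
  rw [Real.norm_eq_abs, abs_of_nonneg (integral_nonneg fun v => norm_nonneg _), hnorm u]
  have he : Real.exp ((b12 ^ 2 * u ^ 2 / s - b11 * u ^ 2) / 2)
      = Real.exp (-((b11 - b12 ^ 2 / s) / 2) * u ^ 2) := by
    congr 1; field_simp; ring
  rw [he]
  have h1 : |χ u| ≤ 1 := hχ1 u
  have h2 : (0:ℝ) ≤ Real.sqrt (2 * π / s) * Real.exp (-((b11 - b12 ^ 2 / s) / 2) * u ^ 2) := by
    positivity
  nlinarith [abs_nonneg (χ u), h2]

lemma prod_value (hb11 : 0 < b11) {s : ℝ} (hs : 0 < s) (hbs : b12 ^ 2 < b11 * s)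
    {χ : ℝ → ℝ} (hχ : Measurable χ) (hχ1 : ∀ u, |χ u| ≤ 1) :
    (∫ uv : ℝ × ℝ, χ uv.1 *
        Real.exp (-(s * uv.2 ^ 2 - 2 * b12 * uv.1 * uv.2 + b11 * uv.1 ^ 2) / 2)
        ∂((volume : Measure ℝ).prod volume))
      = ∫ u : ℝ, χ u * (Real.sqrt (2 * π / s) *
          Real.exp ((b12 ^ 2 * u ^ 2 / s - b11 * u ^ 2) / 2)) := by
  rw [integral_prod _ (prod_integrable hb11 hs hbs hχ hχ1)]
  refine integral_congr_ae (Filter.Eventually.of_forall fun u => ?_)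
  dsimp only
  rw [integral_const_mul, R_value hs u]


lemma density_integral (hb11 : 0 < b11) (hb22 : 0 < b22)
    (hdet : 0 < b11 * b22 - b12 ^ 2)
    {K : ℝ} (hK : 0 ≤ K) {t' : ℝ} (ht' : 0 ≤ t')
    {χ : ℝ → ℝ} (hχ : Measurable χ) (hχ1 : ∀ u, |χ u| ≤ 1) :
    (∫ y : Fin 2 → ℝ, χ (y 0) * Real.exp (-(t' * (y 1) ^ 2) / 2)
        ∂(volume.withDensity (fun x => ENNReal.ofReal
          (K * Real.exp (-(b11 * (x 0) ^ 2 - 2 * b12 * (x 0) * (x 1) + b22 * (x 1) ^ 2) / 2)))))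
      = K * ∫ u : ℝ, χ u * (Real.sqrt (2 * π / (t' + b22)) *
          Real.exp ((b12 ^ 2 * u ^ 2 / (t' + b22) - b11 * u ^ 2) / 2)) := by
  have hs : 0 < t' + b22 := by linarith
  have hbs : b12 ^ 2 < b11 * (t' + b22) := by nlinarith
  set p : (Fin 2 → ℝ) → ℝ := fun x =>
    K * Real.exp (-(b11 * (x 0) ^ 2 - 2 * b12 * (x 0) * (x 1) + b22 * (x 1) ^ 2) / 2) with hp
  have hpm : Measurable fun x : Fin 2 → ℝ => Real.toNNReal (p x) := by
    apply Measurable.real_toNNReal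
    apply measurable_const.mul
    apply Real.measurable_exp.comp
    fun_prop
  have hofReal : (fun x : Fin 2 → ℝ => ENNReal.ofReal (p x))
      = fun x => ((Real.toNNReal (p x) : ℝ≥0) : ℝ≥0∞) := rfl
  rw [hofReal, integral_withDensity_eq_integral_smul hpm]
  have hpnn : ∀ x, (0:ℝ) ≤ p x := fun x => mul_nonneg hK (Real.exp_pos _).le
  have step1 : (∫ x : Fin 2 → ℝ, Real.toNNReal (p x) •
        (χ (x 0) * Real.exp (-(t' * (x 1) ^ 2) / 2)))
      = ∫ x : Fin 2 → ℝ, K * (χ (x 0) *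
          Real.exp (-((t' + b22) * (x 1) ^ 2 - 2 * b12 * (x 0) * (x 1) + b11 * (x 0) ^ 2) / 2)) := by
    refine integral_congr_ae (Filter.Eventually.of_forall fun x => ?_)
    dsimp only
    rw [NNReal.smul_def, Real.coe_toNNReal _ (hpnn x), smul_eq_mul, hp]
    dsimp only
    rw [show Real.exp (-((t' + b22) * (x 1) ^ 2 - 2 * b12 * (x 0) * (x 1) + b11 * (x 0) ^ 2) / 2)
        = Real.exp (-(b11 * (x 0) ^ 2 - 2 * b12 * (x 0) * (x 1) + b22 * (x 1) ^ 2) / 2) *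
          Real.exp (-(t' * (x 1) ^ 2) / 2) from by rw [← Real.exp_add]; congr 1; ring]
    ring
  rw [step1]
  have step2 : (∫ x : Fin 2 → ℝ, K * (χ (x 0) *
        Real.exp (-((t' + b22) * (x 1) ^ 2 - 2 * b12 * (x 0) * (x 1) + b11 * (x 0) ^ 2) / 2)))
      = ∫ uv : ℝ × ℝ, K * (χ uv.1 *
          Real.exp (-((t' + b22) * uv.2 ^ 2 - 2 * b12 * uv.1 * uv.2 + b11 * uv.1 ^ 2) / 2)) :=
    (volume_preserving_finTwoArrow ℝ).integral_comp
      (MeasurableEquiv.finTwoArrow).measurableEmbedding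
      (fun uv : ℝ × ℝ => K * (χ uv.1 *
        Real.exp (-((t' + b22) * uv.2 ^ 2 - 2 * b12 * uv.1 * uv.2 + b11 * uv.1 ^ 2) / 2)))
  rw [step2]
  have step3 : (∫ uv : ℝ × ℝ, K * (χ uv.1 *
        Real.exp (-((t' + b22) * uv.2 ^ 2 - 2 * b12 * uv.1 * uv.2 + b11 * uv.1 ^ 2) / 2)))
      = K * ∫ uv : ℝ × ℝ, χ uv.1 *
          Real.exp (-((t' + b22) * uv.2 ^ 2 - 2 * b12 * uv.1 * uv.2 + b11 * uv.1 ^ 2) / 2) :=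
    integral_const_mul _ _
  rw [step3, Measure.volume_eq_prod, prod_value hb11 hs hbs hχ hχ1]

end GaussAux



/-- The centered multivariate Gaussian measure on `ℝⁿ` with (positive definite)
covariance matrix `S`, defined via its density with respect to Lebesgue measure. -/
noncomputable def multivariateGaussian {n : ℕ} (S : Matrix (Fin n) (Fin n) ℝ) :
    Measure (Fin n → ℝ) :=
  volume.withDensity fun x =>
    ENNReal.ofReal ((Real.sqrt ((2 * Real.pi) ^ n * S.det))⁻¹ *
      Real.exp (-(x ⬝ᵥ S⁻¹.mulVec x) / 2))

set_option maxHeartbeats 1000000 in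
/-- Let `S = [[b₁₁, −b₁₂], [−b₁₂, b₂₂]]` be positive definite
(`b₁₁, b₂₂ > 0`, `b₁₁b₂₂ − b₁₂² > 0`), let `η, η'` be independent `N(0, S⁻¹)` vectors
on `ℝ²`, and set `X₁ = ½(η₁² + η'₁²)`, `X₂ = ½(η₂² + η'₂²)`. Then for every `t ≥ 0`,
`E[exp (−t X₂) | σ(X₁)] = (b₂₂/(t + b₂₂)) exp (−b₁₂² t X₁ / (b₂₂ (t + b₂₂)))` a.s. -/
theorem conditional_laplace_bivariate (b11 b22 b12 : ℝ)
    (hb11 : 0 < b11) (hb22 : 0 < b22) (hdet : 0 < b11 * b22 - b12 ^ 2)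
    (S : Matrix (Fin 2) (Fin 2) ℝ)
    (hS : S = Matrix.of ![![b11, -b12], ![-b12, b22]])
    {Ω : Type*} [MeasurableSpace Ω] (P : Measure Ω) [IsProbabilityMeasure P]
    (η η' : Ω → Fin 2 → ℝ) (hη : Measurable η) (hη' : Measurable η')
    (hlawη : Measure.map η P = multivariateGaussian S⁻¹)
    (hlawη' : Measure.map η' P = multivariateGaussian S⁻¹)
    (hindep : IndepFun η η' P)
    (X1 X2 : Ω → ℝ)
    (hX1 : ∀ ω, X1 ω = ((η ω 0) ^ 2 + (η' ω 0) ^ 2) / 2)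
    (hX2 : ∀ ω, X2 ω = ((η ω 1) ^ 2 + (η' ω 1) ^ 2) / 2) :
    ∀ t : ℝ, 0 ≤ t →
      P[(fun ω => Real.exp (-t * X2 ω)) | MeasurableSpace.comap X1 inferInstance]
        =ᵐ[P]
      fun ω => (b22 / (t + b22)) *
        Real.exp (-(b12 ^ 2 * t * X1 ω) / (b22 * (t + b22))) := by
  intro t ht
  -- matrix facts
  have hdetS : S.det = b11 * b22 - b12 ^ 2 := by
    rw [hS, Matrix.det_fin_two]
    simp
    ring
  have hdetS_pos : 0 < S.det := by rw [hdetS]; exact hdet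
  have hSinvinv : S⁻¹⁻¹ = S :=
    Matrix.nonsing_inv_nonsing_inv S (isUnit_iff_ne_zero.mpr hdetS_pos.ne')
  have hdetSinv : S⁻¹.det = (S.det)⁻¹ := by
    rw [Matrix.det_nonsing_inv, Ring.inverse_eq_inv']
  set K : ℝ := (Real.sqrt ((2 * Real.pi) ^ 2 * S⁻¹.det))⁻¹ with hKdef
  have hKpos : 0 < K := by
    rw [hKdef]
    apply inv_pos.mpr
    apply Real.sqrt_pos.mpr
    rw [hdetSinv]
    have := Real.pi_pos
    positivity
  have hquad : ∀ x : Fin 2 → ℝ, x ⬝ᵥ S⁻¹⁻¹.mulVec x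
      = b11 * (x 0) ^ 2 - 2 * b12 * (x 0) * (x 1) + b22 * (x 1) ^ 2 := by
    intro x
    rw [hSinvinv, hS]
    simp [Matrix.mulVec, dotProduct, Fin.sum_univ_two]
    ring
  have hμd : multivariateGaussian S⁻¹ = volume.withDensity (fun x => ENNReal.ofReal
      (K * Real.exp (-(b11 * (x 0) ^ 2 - 2 * b12 * (x 0) * (x 1) + b22 * (x 1) ^ 2) / 2))) := by
    unfold _root_.multivariateGaussian
    congr 1
    funext x
    rw [hquad x]
  set μ := multivariateGaussian S⁻¹ with hμdef
  haveI hPμ : IsProbabilityMeasure μ := hlawη ▸ Measure.isProbabilityMeasure_map hη.aemeasurable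
  have hs0 : 0 < t + b22 := by linarith
  set c : ℝ := Real.sqrt (b22 / (t + b22)) with hcdef
  set α : ℝ := t * b12 ^ 2 / (2 * b22 * (t + b22)) with hαdef
  have hα0 : 0 ≤ α := by
    rw [hαdef]
    apply div_nonneg (mul_nonneg ht (sq_nonneg _))
    positivity
  have hc0 : 0 ≤ c := Real.sqrt_nonneg _
  have hc1 : c ≤ 1 := by
    rw [hcdef]
    rw [show (1:ℝ) = Real.sqrt 1 from (Real.sqrt_one).symm]
    apply Real.sqrt_le_sqrt
    rw [div_le_one hs0]
    linarith
  have hcsq : c * c = b22 / (t + b22) := Real.mul_self_sqrt (by positivity)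
  -- the key one-dimensional marginal identity
  have L2 : ∀ ψ : ℝ → ℝ, Measurable ψ → (∀ u, |ψ u| ≤ 1) →
      (∫ y, ψ (y 0) * Real.exp (-(t * (y 1) ^ 2) / 2) ∂μ)
        = ∫ y, ψ (y 0) * (c * Real.exp (-(α * (y 0) ^ 2))) ∂μ := by
    intro ψ hψ hψ1
    set χ : ℝ → ℝ := fun u => ψ u * (c * Real.exp (-(α * u ^ 2))) with hχdef
    have hχm : Measurable χ := by
      apply hψ.mul
      apply measurable_const.mul
      exact Real.measurable_exp.comp (by fun_prop)
    have hχ1 : ∀ u, |χ u| ≤ 1 := by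
      intro u
      rw [hχdef]
      have h1 := hψ1 u
      have h2 : Real.exp (-(α * u ^ 2)) ≤ 1 := Real.exp_le_one_iff.mpr (by nlinarith [sq_nonneg u])
      have h3 : (0:ℝ) < Real.exp (-(α * u ^ 2)) := Real.exp_pos _
      rw [abs_mul, abs_mul, abs_of_nonneg hc0, abs_of_pos h3]
      have h5 : (0:ℝ) ≤ c * Real.exp (-(α * u ^ 2)) := mul_nonneg hc0 h3.le
      have h4 : c * Real.exp (-(α * u ^ 2)) ≤ 1 := by nlinarith
      nlinarith [mul_nonneg (sub_nonneg.mpr h1) h5]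
    have hL : (∫ y, ψ (y 0) * Real.exp (-(t * (y 1) ^ 2) / 2) ∂μ)
        = K * ∫ u : ℝ, ψ u * (Real.sqrt (2 * Real.pi / (t + b22)) *
            Real.exp ((b12 ^ 2 * u ^ 2 / (t + b22) - b11 * u ^ 2) / 2)) := by
      rw [hμd]
      exact density_integral hb11 hb22 hdet hKpos.le ht hψ hψ1
    have hR : (∫ y, χ (y 0) * Real.exp (-((0:ℝ) * (y 1) ^ 2) / 2) ∂μ)
        = K * ∫ u : ℝ, χ u * (Real.sqrt (2 * Real.pi / (0 + b22)) *
            Real.exp ((b12 ^ 2 * u ^ 2 / (0 + b22) - b11 * u ^ 2) / 2)) := by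
      rw [hμd]
      exact density_integral hb11 hb22 hdet hKpos.le le_rfl hχm hχ1
    have hR' : (∫ y, χ (y 0) * Real.exp (-((0:ℝ) * (y 1) ^ 2) / 2) ∂μ)
        = ∫ y, ψ (y 0) * (c * Real.exp (-(α * (y 0) ^ 2))) ∂μ := by
      refine integral_congr_ae (Filter.Eventually.of_forall fun y => ?_)
      simp [hχdef]
    rw [hL, ← hR', hR]
    congr 1
    refine integral_congr_ae (Filter.Eventually.of_forall fun u => ?_)
    have e1 : c * Real.sqrt (2 * Real.pi / (0 + b22)) = Real.sqrt (2 * Real.pi / (t + b22)) := by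
      rw [hcdef, ← Real.sqrt_mul (by positivity)]
      congr 1
      rw [zero_add]
      field_simp
    have e2 : Real.exp (-(α * u ^ 2)) * Real.exp ((b12 ^ 2 * u ^ 2 / (0 + b22) - b11 * u ^ 2) / 2)
        = Real.exp ((b12 ^ 2 * u ^ 2 / (t + b22) - b11 * u ^ 2) / 2) := by
      rw [← Real.exp_add]
      congr 1
      rw [hαdef, zero_add]
      field_simp
      ring
    rw [hχdef]
    dsimp only
    rw [← e1, ← e2]
    ring
  -- measurability on Ω
  have hη0 : Measurable fun ω => η ω 0 := (measurable_pi_apply 0).comp hη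
  have hη1 : Measurable fun ω => η ω 1 := (measurable_pi_apply 1).comp hη
  have hη'0 : Measurable fun ω => η' ω 0 := (measurable_pi_apply 0).comp hη'
  have hη'1 : Measurable fun ω => η' ω 1 := (measurable_pi_apply 1).comp hη'
  have hX1m : Measurable X1 := by
    have hfe : X1 = fun ω => ((η ω 0) ^ 2 + (η' ω 0) ^ 2) / 2 := funext hX1
    rw [hfe]
    exact ((hη0.pow_const 2).add (hη'0.pow_const 2)).div_const 2
  have hX2m : Measurable X2 := by
    have hfe : X2 = fun ω => ((η ω 1) ^ 2 + (η' ω 1) ^ 2) / 2 := funext hX2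
    rw [hfe]
    exact ((hη1.pow_const 2).add (hη'1.pow_const 2)).div_const 2
  have hX1nn : ∀ ω, 0 ≤ X1 ω := fun ω => by rw [hX1 ω]; positivity
  have hX2nn : ∀ ω, 0 ≤ X2 ω := fun ω => by rw [hX2 ω]; positivity
  have hm : MeasurableSpace.comap X1 inferInstance ≤ ‹MeasurableSpace Ω› :=
    measurable_iff_comap_le.mp hX1m
  haveI : IsFiniteMeasure (P.trim hm) := isFiniteMeasure_trim hm
  set g0 : ℝ → ℝ :=
    fun a => b22 / (t + b22) * Real.exp (-(b12 ^ 2 * t * a) / (b22 * (t + b22))) with hg0def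
  have hg0m : Measurable g0 := by
    apply measurable_const.mul
    exact Real.measurable_exp.comp (by fun_prop)
  have hg0b : ∀ a, 0 ≤ a → 0 ≤ g0 a ∧ g0 a ≤ 1 := by
    intro a ha
    have h1 : Real.exp (-(b12 ^ 2 * t * a) / (b22 * (t + b22))) ≤ 1 := by
      apply Real.exp_le_one_iff.mpr
      apply div_nonpos_of_nonpos_of_nonneg (by nlinarith [mul_nonneg (mul_nonneg (sq_nonneg b12) ht) ha]) (by positivity)
    have h2 : b22 / (t + b22) ≤ 1 := by rw [div_le_one hs0]; linarith
    have h3 : (0:ℝ) < Real.exp (-(b12 ^ 2 * t * a) / (b22 * (t + b22))) := Real.exp_pos _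
    have h4 : (0:ℝ) ≤ b22 / (t + b22) := by positivity
    constructor
    · rw [hg0def]; positivity
    · rw [hg0def]; dsimp only; nlinarith
  have hfm : Measurable fun ω => Real.exp (-t * X2 ω) :=
    Real.measurable_exp.comp (hX2m.const_mul (-t))
  have hf : Integrable (fun ω => Real.exp (-t * X2 ω)) P := by
    refine (integrable_const (1:ℝ)).mono' hfm.aestronglyMeasurable ?_
    refine Filter.Eventually.of_forall fun ω => ?_
    rw [Real.norm_eq_abs, abs_of_pos (Real.exp_pos _)]
    exact Real.exp_le_one_iff.mpr (by nlinarith [hX2nn ω])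
  have hgI : Integrable (fun ω => g0 (X1 ω)) P := by
    refine (integrable_const (1:ℝ)).mono' (hg0m.comp hX1m).aestronglyMeasurable ?_
    refine Filter.Eventually.of_forall fun ω => ?_
    rw [Real.norm_eq_abs, abs_of_nonneg (hg0b _ (hX1nn ω)).1]
    exact (hg0b _ (hX1nn ω)).2
  have hX1mm : Measurable[MeasurableSpace.comap X1 inferInstance] X1 := fun s hs => ⟨s, hs, rfl⟩
  have hgsm : AEStronglyMeasurable[MeasurableSpace.comap X1 inferInstance]
      (fun ω => g0 (X1 ω)) P :=
    StronglyMeasurable.aestronglyMeasurable (Measurable.stronglyMeasurable (hg0m.comp hX1mm))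
  -- boundedness helpers
  have habs : ∀ a b : ℝ, |a| ≤ 1 → 0 ≤ b → b ≤ 1 → |a * b| ≤ 1 := by
    intro a b h1 h2 h3
    rw [abs_mul, abs_of_nonneg h2]
    nlinarith [abs_nonneg a]
  have hcexp : ∀ w : ℝ, 0 ≤ c * Real.exp (-(α * w ^ 2)) ∧ c * Real.exp (-(α * w ^ 2)) ≤ 1 := by
    intro w
    have h3 : (0:ℝ) < Real.exp (-(α * w ^ 2)) := Real.exp_pos _
    have h2 : Real.exp (-(α * w ^ 2)) ≤ 1 := Real.exp_le_one_iff.mpr (by nlinarith [sq_nonneg w])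
    exact ⟨mul_nonneg hc0 h3.le, by nlinarith⟩
  have htexp : ∀ w : ℝ, 0 ≤ Real.exp (-(t * w ^ 2) / 2) ∧ Real.exp (-(t * w ^ 2) / 2) ≤ 1 := by
    intro w
    exact ⟨(Real.exp_pos _).le, Real.exp_le_one_iff.mpr (by nlinarith [sq_nonneg w])⟩
  -- transfer to the product space
  have hπ : Measurable fun ω => (η ω, η' ω) := hη.prodMk hη'
  have hlawπ : Measure.map (fun ω => (η ω, η' ω)) P = μ.prod μ := by
    rw [(indepFun_iff_map_prod_eq_prod_map_map hη.aemeasurable hη'.aemeasurable).mp hindep,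
      hlawη, hlawη']
  have transfer : ∀ F : (Fin 2 → ℝ) × (Fin 2 → ℝ) → ℝ, Measurable F →
      (∫ ω, F (η ω, η' ω) ∂P) = ∫ z, F z ∂(μ.prod μ) := by
    intro F hF
    rw [← hlawπ]
    exact (integral_map hπ.aemeasurable hF.aestronglyMeasurable).symm
  have bdd : ∀ F : (Fin 2 → ℝ) × (Fin 2 → ℝ) → ℝ, Measurable F → (∀ z, |F z| ≤ 1) →
      Integrable F (μ.prod μ) := by
    intro F hF hb
    refine (integrable_const (1:ℝ)).mono' hF.aestronglyMeasurable ?_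
    exact Filter.Eventually.of_forall fun z => by rw [Real.norm_eq_abs]; exact hb z
  -- the main set-integral identity
  have key : ∀ B : Set ℝ, MeasurableSet B →
      (∫ ω in X1 ⁻¹' B, g0 (X1 ω) ∂P) = ∫ ω in X1 ⁻¹' B, Real.exp (-t * X2 ω) ∂P := by
    intro B hB
    set h : ℝ → ℝ := B.indicator fun _ => (1:ℝ) with hhdef
    have hhm : Measurable h := measurable_const.indicator hB
    have hh1 : ∀ a, |h a| ≤ 1 := by
      intro a
      rw [hhdef]
      by_cases ha : a ∈ B <;> simp [Set.indicator_apply, ha]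
    have hsB : MeasurableSet (X1 ⁻¹' B) := hX1m hB
    have ind1 : ∀ F : Ω → ℝ, (∫ ω in X1 ⁻¹' B, F ω ∂P) = ∫ ω, h (X1 ω) * F ω ∂P := by
      intro F
      rw [← integral_indicator hsB]
      refine integral_congr_ae (Filter.Eventually.of_forall fun ω => ?_)
      by_cases hω : X1 ω ∈ B <;>
        simp [Set.indicator_apply, Set.mem_preimage, hω, hhdef]
    rw [ind1, ind1]
    simp only [hX1, hX2]
    -- product-space functions
    set F1 : (Fin 2 → ℝ) × (Fin 2 → ℝ) → ℝ := fun z =>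
      h ((z.1 0 ^ 2 + z.2 0 ^ 2) / 2) * Real.exp (-t * ((z.1 1 ^ 2 + z.2 1 ^ 2) / 2)) with hF1def
    set F2 : (Fin 2 → ℝ) × (Fin 2 → ℝ) → ℝ := fun z =>
      h ((z.1 0 ^ 2 + z.2 0 ^ 2) / 2) * g0 ((z.1 0 ^ 2 + z.2 0 ^ 2) / 2) with hF2def
    set G : (Fin 2 → ℝ) × (Fin 2 → ℝ) → ℝ := fun z =>
      (h ((z.1 0 ^ 2 + z.2 0 ^ 2) / 2) * Real.exp (-(t * (z.1 1) ^ 2) / 2)) *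
        (c * Real.exp (-(α * (z.2 0) ^ 2))) with hGdef
    set H : (Fin 2 → ℝ) × (Fin 2 → ℝ) → ℝ := fun z =>
      (h ((z.1 0 ^ 2 + z.2 0 ^ 2) / 2) * (c * Real.exp (-(α * (z.2 0) ^ 2)))) *
        (c * Real.exp (-(α * (z.1 0) ^ 2))) with hHdef
    have minner : Measurable fun z : (Fin 2 → ℝ) × (Fin 2 → ℝ) => (z.1 0 ^ 2 + z.2 0 ^ 2) / 2 := by
      fun_prop
    have hF1m : Measurable F1 := by
      apply (hhm.comp minner).mul
      exact Real.measurable_exp.comp (by fun_prop)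
    have hF2m : Measurable F2 := (hhm.comp minner).mul (hg0m.comp minner)
    have hGm : Measurable G := by
      apply Measurable.mul
      · exact (hhm.comp minner).mul (Real.measurable_exp.comp (by fun_prop))
      · exact measurable_const.mul (Real.measurable_exp.comp (by fun_prop))
    have hHm : Measurable H := by
      apply Measurable.mul
      · exact (hhm.comp minner).mul (measurable_const.mul (Real.measurable_exp.comp (by fun_prop)))
      · exact measurable_const.mul (Real.measurable_exp.comp (by fun_prop))
    have hF1b : ∀ z, |F1 z| ≤ 1 := by
      intro z
      rw [hF1def]
      have e : Real.exp (-t * ((z.1 1 ^ 2 + z.2 1 ^ 2) / 2)) ≤ 1 :=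
        Real.exp_le_one_iff.mpr (by nlinarith [sq_nonneg (z.1 1), sq_nonneg (z.2 1)])
      exact habs _ _ (hh1 _) (Real.exp_pos _).le e
    have hGb : ∀ z, |G z| ≤ 1 := by
      intro z
      rw [hGdef]
      exact habs _ _ (habs _ _ (hh1 _) (htexp (z.1 1)).1 (htexp (z.1 1)).2)
        (hcexp (z.2 0)).1 (hcexp (z.2 0)).2
    have hHb : ∀ z, |H z| ≤ 1 := by
      intro z
      rw [hHdef]
      exact habs _ _ (habs _ _ (hh1 _) (hcexp (z.2 0)).1 (hcexp (z.2 0)).2)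
        (hcexp (z.1 0)).1 (hcexp (z.1 0)).2
    have hF1int : Integrable F1 (μ.prod μ) := bdd F1 hF1m hF1b
    have hGint : Integrable G (μ.prod μ) := bdd G hGm hGb
    have hHint : Integrable H (μ.prod μ) := bdd H hHm hHb
    -- inner integral evaluations
    have e_inner1 : ∀ x : Fin 2 → ℝ, (∫ y, F1 (x, y) ∂μ) = ∫ y, G (x, y) ∂μ := by
      intro x
      set ψ : ℝ → ℝ := fun w =>
        h ((x 0 ^ 2 + w ^ 2) / 2) * Real.exp (-(t * (x 1) ^ 2) / 2) with hψdef
      have hψm : Measurable ψ := (hhm.comp (by fun_prop)).mul_const _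
      have hψb : ∀ w, |ψ w| ≤ 1 := fun w =>
        habs _ _ (hh1 _) (htexp (x 1)).1 (htexp (x 1)).2
      have h1 : (∫ y, F1 (x, y) ∂μ) = ∫ y, ψ (y 0) * Real.exp (-(t * (y 1) ^ 2) / 2) ∂μ := by
        refine integral_congr_ae (Filter.Eventually.of_forall fun y => ?_)
        simp only [hF1def, hψdef]
        rw [show Real.exp (-t * ((x 1 ^ 2 + y 1 ^ 2) / 2))
            = Real.exp (-(t * (x 1) ^ 2) / 2) * Real.exp (-(t * (y 1) ^ 2) / 2) from by
          rw [← Real.exp_add]; congr 1; ring]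
        ring
      rw [h1, L2 ψ hψm hψb]
    have e_inner2 : ∀ y : Fin 2 → ℝ, (∫ x, G (x, y) ∂μ) = ∫ x, H (x, y) ∂μ := by
      intro y
      set ψ : ℝ → ℝ := fun w =>
        h ((w ^ 2 + y 0 ^ 2) / 2) * (c * Real.exp (-(α * (y 0) ^ 2))) with hψdef
      have hψm : Measurable ψ := (hhm.comp (by fun_prop)).mul_const _
      have hψb : ∀ w, |ψ w| ≤ 1 := fun w =>
        habs _ _ (hh1 _) (hcexp (y 0)).1 (hcexp (y 0)).2
      have h1 : (∫ x, G (x, y) ∂μ) = ∫ x, ψ (x 0) * Real.exp (-(t * (x 1) ^ 2) / 2) ∂μ := by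
        refine integral_congr_ae (Filter.Eventually.of_forall fun x => ?_)
        simp only [hGdef, hψdef]
        ring
      rw [h1, L2 ψ hψm hψb]
    have hHF2 : ∀ z, H z = F2 z := by
      intro z
      simp only [hHdef, hF2def, hg0def]
      have e3 : c * Real.exp (-(α * (z.2 0) ^ 2)) * (c * Real.exp (-(α * (z.1 0) ^ 2)))
          = b22 / (t + b22) *
            Real.exp (-(b12 ^ 2 * t * ((z.1 0 ^ 2 + z.2 0 ^ 2) / 2)) / (b22 * (t + b22))) := by
        calc c * Real.exp (-(α * (z.2 0) ^ 2)) * (c * Real.exp (-(α * (z.1 0) ^ 2)))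
            = c * c * (Real.exp (-(α * (z.2 0) ^ 2)) * Real.exp (-(α * (z.1 0) ^ 2))) := by ring
          _ = b22 / (t + b22) * Real.exp (-(α * (z.2 0) ^ 2) + -(α * (z.1 0) ^ 2)) := by
              rw [hcsq, Real.exp_add]
          _ = _ := by
              congr 1
              rw [hαdef]
              field_simp
              ring
      rw [mul_assoc, e3]
    calc (∫ ω, h ((η ω 0 ^ 2 + η' ω 0 ^ 2) / 2) * g0 ((η ω 0 ^ 2 + η' ω 0 ^ 2) / 2) ∂P)
        = ∫ z, F2 z ∂(μ.prod μ) := transfer F2 hF2m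
      _ = ∫ z, H z ∂(μ.prod μ) :=
          integral_congr_ae (Filter.Eventually.of_forall fun z => (hHF2 z).symm)
      _ = ∫ y, ∫ x, H (x, y) ∂μ ∂μ := integral_prod_symm H hHint
      _ = ∫ y, ∫ x, G (x, y) ∂μ ∂μ :=
          integral_congr_ae (Filter.Eventually.of_forall fun y => (e_inner2 y).symm)
      _ = ∫ z, G z ∂(μ.prod μ) := (integral_prod_symm G hGint).symm
      _ = ∫ x, ∫ y, G (x, y) ∂μ ∂μ := integral_prod G hGint
      _ = ∫ x, ∫ y, F1 (x, y) ∂μ ∂μ :=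
          integral_congr_ae (Filter.Eventually.of_forall fun x => (e_inner1 x).symm)
      _ = ∫ z, F1 z ∂(μ.prod μ) := (integral_prod F1 hF1int).symm
      _ = ∫ ω, h ((η ω 0 ^ 2 + η' ω 0 ^ 2) / 2) *
            Real.exp (-t * ((η ω 1 ^ 2 + η' ω 1 ^ 2) / 2)) ∂P := (transfer F1 hF1m).symm
  -- conclude via uniqueness of conditional expectation
  refine (ae_eq_condExp_of_forall_setIntegral_eq hm hf
    (fun s _ _ => hgI.integrableOn) ?_ hgsm).symm
  intro s hs _
  obtain ⟨B, hB, rfl⟩ := hs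
  exact key B hB
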